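/- Let Wₖ = p(x, Zₖ)/q(Zₖ|x) with Zₖ i.i.d. from q(·|x), and suppose W₁ is integrable with E[W₁] = p(x) and Var(W₁) < ∞. Then the IWAE bound satisfies log p(x) − L_K → 0 as K → ∞, i.e., L_K converges to log p(x), provided additionally that log((1/K)∑Wₖ) is uniformly integrable. -/

import Mathlib

open MeasureTheory ProbabilityTheory

/-- Consistency of the IWAE bound: with `Zₖ` i.i.d. from the proposal density `q`
and importance ratios `Wₖ = p(x,Zₖ)/q(Zₖ)` integrable with mean `p(x)` and finite
variance, if the logarithms `log((1/K) ∑ₖ Wₖ)` are uniformly integrable then the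
gap `log p(x) − L_K` tends to `0` as `K → ∞`. -/
theorem iwae_bound_consistent
    {Z : Type*} [MeasurableSpace Z] (ν : Measure Z)
    {Ω : Type*} [MeasurableSpace Ω] (Pr : Measure Ω) [IsProbabilityMeasure Pr]
    (pj q : Z → ℝ) (px : ℝ) (Zs : ℕ → Ω → Z) (W : ℕ → Ω → ℝ)
    (hpj_meas : Measurable pj) (hq_meas : Measurable q)
    (hpj_nonneg : ∀ z, 0 ≤ pj z) (hq_nonneg : ∀ z, 0 ≤ q z)
    (hq_prob : ∫ z, q z ∂ν = 1)
    (habs : ∀ z, 0 < pj z → 0 < q z)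
    (hpx : px = ∫ z, pj z ∂ν) (hpx_pos : 0 < px)
    (hZ_meas : ∀ k, Measurable (Zs k))
    -- each `Zₖ` has density `q`, and the `Zₖ` are i.i.d.
    (hlaw : ∀ k, Measure.map (Zs k) Pr = ν.withDensity (fun z => ENNReal.ofReal (q z)))
    (hindep : iIndepFun Zs Pr)
    (hW : ∀ k ω, W k ω = pj (Zs k ω) / q (Zs k ω))
    -- `W₁` is integrable with `E[W₁] = p(x)` and finite variance
    (hW_int : Integrable (W 0) Pr)
    (hW_mean : ∫ ω, W 0 ω ∂Pr = px)
    (hW_var : Integrable (fun ω => (W 0 ω) ^ 2) Pr)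
    -- uniform integrability of `log((1/K) ∑ₖ Wₖ)`
    (hUI : UnifIntegrable
      (fun (K : ℕ) ω => Real.log ((1 / (K : ℝ)) * ∑ k ∈ Finset.range K, W k ω)) 1 Pr) :
    Filter.Tendsto
      (fun K : ℕ =>
        Real.log px -
          ∫ ω, Real.log ((1 / (K : ℝ)) * ∑ k ∈ Finset.range K, W k ω) ∂Pr)
      Filter.atTop (nhds 0) := by
  classical
  set f : Z → ℝ := fun z => pj z / q z with hf_def
  have hf : Measurable f := hpj_meas.div hq_meas
  have hWeq : ∀ k, W k = f ∘ Zs k := fun k => funext fun ω => hW k ω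
  have hWmeas : ∀ k, Measurable (W k) := fun k => (hWeq k) ▸ hf.comp (hZ_meas k)
  have hident : ∀ k, IdentDistrib (W k) (W 0) Pr Pr := by
    intro k
    refine ⟨(hWmeas k).aemeasurable, (hWmeas 0).aemeasurable, ?_⟩
    rw [hWeq k, hWeq 0, ← Measure.map_map hf (hZ_meas k), ← Measure.map_map hf (hZ_meas 0),
      hlaw k, hlaw 0]
  have hpair : Pairwise (Function.onFun (IndepFun · · Pr) W) := by
    intro i j hij
    have h1 : IndepFun (Zs i) (Zs j) Pr := hindep.indepFun hij
    have := h1.comp hf hf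
    rw [Function.onFun, hWeq i, hWeq j]
    exact this
  have hSLLN := ProbabilityTheory.strong_law_ae_real W hW_int hpair hident
  rw [hW_mean] at hSLLN
  set g : ℕ → Ω → ℝ :=
    fun K ω => Real.log ((1 / (K : ℝ)) * ∑ k ∈ Finset.range K, W k ω) with hg_def
  have hgmeas : ∀ K, AEStronglyMeasurable (g K) Pr := fun K =>
    (Real.measurable_log.comp
      (measurable_const.mul (Finset.measurable_sum _ fun k _ => hWmeas k))).aestronglyMeasurable
  have hae : ∀ᵐ ω ∂Pr, Filter.Tendsto (fun K => g K ω) Filter.atTop (nhds (Real.log px)) := by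
    filter_upwards [hSLLN] with ω hω
    have h2 : Filter.Tendsto (fun K : ℕ => (1 / (K : ℝ)) * ∑ k ∈ Finset.range K, W k ω)
        Filter.atTop (nhds px) := by
      simpa [div_eq_mul_inv, mul_comm] using hω
    exact ((Real.continuousAt_log (ne_of_gt hpx_pos)).tendsto.comp h2)
  have hmeaslim : TendstoInMeasure Pr g Filter.atTop (fun _ => Real.log px) :=
    tendstoInMeasure_of_tendsto_ae hgmeas hae
  have hglim : MemLp (fun _ : Ω => Real.log px) 1 Pr := memLp_const _
  have hL1 : Filter.Tendsto (fun K => eLpNorm (g K - fun _ => Real.log px) 1 Pr)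
      Filter.atTop (nhds 0) :=
    tendsto_Lp_finite_of_tendstoInMeasure le_rfl ENNReal.one_ne_top hgmeas hglim hUI hmeaslim
  have hint : ∀ᶠ K in Filter.atTop, Integrable (g K) Pr := by
    have hev : ∀ᶠ K in Filter.atTop,
        eLpNorm (g K - fun _ => Real.log px) 1 Pr < 1 :=
      hL1.eventually_lt_const (by norm_num)
    filter_upwards [hev] with K hK
    have hmem : MemLp (g K - fun _ => Real.log px) 1 Pr :=
      ⟨(hgmeas K).sub aestronglyMeasurable_const, hK.trans_le le_top⟩
    have h3 := (memLp_one_iff_integrable.mp hmem).add (integrable_const (Real.log px))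
    have h4 : (g K - fun _ => Real.log px) + (fun _ => Real.log px) = g K := by
      funext ω; simp
    rwa [h4] at h3
  have hintlim : Filter.Tendsto (fun K => ∫ ω, g K ω ∂Pr) Filter.atTop
      (nhds (∫ _ : Ω, Real.log px ∂Pr)) :=
    tendsto_integral_of_L1' (fun _ => Real.log px) aestronglyMeasurable_const hint hL1
  have hconst : (∫ _ : Ω, Real.log px ∂Pr) = Real.log px := by simp
  rw [hconst] at hintlim
  have := (tendsto_const_nhds (x := Real.log px) (f := Filter.atTop (α := ℕ))).sub hintlim
  simpa only [hg_def, sub_self] using this
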